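/- Let T be a contraction on H whose non-unitary part t := T|_{K^⊥} : K^⊥ → K⋆^⊥ satisfies ‖t‖ < 1, and let t* : K⋆^⊥ → K^⊥ denote its adjoint. Fix λ with |λ| < 1 and let a ∈ W_λ ∩ A_T^⊥s, with components a₊ ∈ K^⊥ and a₋ ∈ K⋆^⊥ given by the orthogonal decomposition A_T^⊥s = A_T ⊕ (K^⊥ × {0}) ⊕ ({0} × K⋆^⊥), i.e. a = (x₀, Tx₀) + (a₊, 0) + (0, a₋). Define Γ'₊a := (Id − t*t)^{-1/2}a₊ − t*(Id − tt*)^{-1/2}a₋ ∈ K^⊥ and Γ'₋a := t(Id − t*t)^{-1/2}a₊ − (Id − tt*)^{-1/2}a₋ ∈ K⋆^⊥. Then Θ_T(λ)(Γ'₊a) + Γ'₋a = 0, where Θ_T(λ)u := −Tu + λ𝔇⋆(Id − λT*)⁻¹𝔇u for u ∈ K^⊥ is the Sz.-Nagy–Foias characteristic function. -/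

import Mathlib

set_option synthInstance.maxHeartbeats 1000000
set_option maxHeartbeats 2000000
open scoped InnerProductSpace
open ContinuousLinearMap

section Aux

variable {E F : Type*} [NormedAddCommGroup E] [InnerProductSpace ℂ E] [CompleteSpace E]
  [NormedAddCommGroup F] [InnerProductSpace ℂ F] [CompleteSpace F]

lemma aux_sqrt_eq_cfc_real (b : E →L[ℂ] E) (hb : 0 ≤ b) :
    CFC.sqrt b = cfc Real.sqrt b := by
  have hsa : IsSelfAdjoint b := ((ContinuousLinearMap.nonneg_iff_isPositive b).mp hb).isSelfAdjoint
  refine CFC.sqrt_unique ?_ ?_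
  · rw [← cfc_mul _ _ b]
    have h : (spectrum ℝ b).EqOn (fun x => Real.sqrt x * Real.sqrt x) id := fun x hx =>
      Real.mul_self_sqrt (spectrum_nonneg_of_nonneg hb hx)
    rw [cfc_congr h, cfc_id ℝ b]
  · exact cfc_nonneg fun x _ => Real.sqrt_nonneg x

end Aux

section Aux2

variable {E F : Type*} [NormedAddCommGroup E] [InnerProductSpace ℂ E] [CompleteSpace E]
  [NormedAddCommGroup F] [InnerProductSpace ℂ F] [CompleteSpace F]

lemma aux_intertwine_cfc_sqrt (A : E →L[ℂ] F) (b : E →L[ℂ] E) (c : F →L[ℂ] F)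
    (hb : 0 ≤ b) (hc : 0 ≤ c) (h : A ∘L b = c ∘L A) :
    A ∘L CFC.sqrt b = CFC.sqrt c ∘L A := by
  obtain hE | hE := subsingleton_or_nontrivial E
  · ext x; rw [Subsingleton.elim x (0 : E)]; simp
  obtain hF | hF := subsingleton_or_nontrivial F
  · ext x; exact Subsingleton.elim _ _
  have hbsa : IsSelfAdjoint b := ((ContinuousLinearMap.nonneg_iff_isPositive b).mp hb).isSelfAdjoint
  have hcsa : IsSelfAdjoint c := ((ContinuousLinearMap.nonneg_iff_isPositive c).mp hc).isSelfAdjoint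
  have hpow : ∀ n : ℕ, A ∘L (b ^ n) = (c ^ n) ∘L A := by
    intro n; induction n with
    | zero => simp [ContinuousLinearMap.one_def]
    | succ n ih =>
      rw [pow_succ, pow_succ, ContinuousLinearMap.mul_def, ContinuousLinearMap.mul_def,
        ← ContinuousLinearMap.comp_assoc, ih, ContinuousLinearMap.comp_assoc, h,
        ← ContinuousLinearMap.comp_assoc]
  have hpoly : ∀ q : Polynomial ℝ, A ∘L (Polynomial.aeval b q) = (Polynomial.aeval c q) ∘L A := by
    intro q
    induction q using Polynomial.induction_on' with
    | add p q hp hq => rw [map_add, map_add, comp_add, add_comp, hp, hq]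
    | monomial n r =>
      rw [Polynomial.aeval_monomial, Polynomial.aeval_monomial,
        Algebra.algebraMap_eq_smul_one, Algebra.algebraMap_eq_smul_one,
        smul_one_mul, smul_one_mul]
      ext x
      have h3 := ContinuousLinearMap.ext_iff.mp (hpow n) x
      simp only [ContinuousLinearMap.comp_apply] at h3
      simp only [ContinuousLinearMap.comp_apply, ContinuousLinearMap.smul_apply,
        A.map_smul_of_tower, h3]
  set M : ℝ := max ‖b‖ ‖c‖ with hM
  have hσb : spectrum ℝ b ⊆ Set.Icc 0 M := fun x hx =>
    ⟨spectrum_nonneg_of_nonneg hb hx,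
      le_trans (le_trans (le_abs_self x) (spectrum.norm_le_norm_of_mem hx)) (le_max_left _ _)⟩
  have hσc : spectrum ℝ c ⊆ Set.Icc 0 M := fun x hx =>
    ⟨spectrum_nonneg_of_nonneg hc hx,
      le_trans (le_trans (le_abs_self x) (spectrum.norm_le_norm_of_mem hx)) (le_max_right _ _)⟩
  have main : ∀ ε : ℝ, 0 < ε →
      ‖A ∘L cfc Real.sqrt b - cfc Real.sqrt c ∘L A‖ ≤ 2 * ‖A‖ * ε := by
    intro ε hε
    obtain ⟨p, hp⟩ := exists_polynomial_near_of_continuousOn 0 M Real.sqrt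
      Real.continuous_sqrt.continuousOn ε hε
    have h1 : ‖cfc Real.sqrt b - cfc p.eval b‖ ≤ ε := by
      rw [← cfc_sub Real.sqrt p.eval b]
      refine norm_cfc_le hε.le fun x hx => ?_
      rw [Real.norm_eq_abs, abs_sub_comm]
      exact (hp x (hσb hx)).le
    have h2 : ‖cfc p.eval c - cfc Real.sqrt c‖ ≤ ε := by
      rw [← cfc_sub p.eval Real.sqrt c]
      refine norm_cfc_le hε.le fun x hx => ?_
      rw [Real.norm_eq_abs]
      exact (hp x (hσc hx)).le
    have hmid : A ∘L cfc p.eval b = cfc p.eval c ∘L A := by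
      rw [cfc_polynomial p b, cfc_polynomial p c]
      exact hpoly p
    have hsplit : A ∘L cfc Real.sqrt b - cfc Real.sqrt c ∘L A
        = A ∘L (cfc Real.sqrt b - cfc p.eval b) + (cfc p.eval c - cfc Real.sqrt c) ∘L A := by
      rw [comp_sub, sub_comp, hmid]; abel
    calc ‖A ∘L cfc Real.sqrt b - cfc Real.sqrt c ∘L A‖
        ≤ ‖A ∘L (cfc Real.sqrt b - cfc p.eval b)‖ + ‖(cfc p.eval c - cfc Real.sqrt c) ∘L A‖ := by
          rw [hsplit]; exact norm_add_le _ _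
      _ ≤ ‖A‖ * ε + ε * ‖A‖ := by
          refine add_le_add ((opNorm_comp_le _ _).trans ?_) ((opNorm_comp_le _ _).trans ?_)
          · exact mul_le_mul_of_nonneg_left h1 (norm_nonneg _)
          · exact mul_le_mul_of_nonneg_right h2 (norm_nonneg _)
      _ = 2 * ‖A‖ * ε := by ring
  have hzero : A ∘L cfc Real.sqrt b - cfc Real.sqrt c ∘L A = 0 := by
    by_contra hne
    have hpos : 0 < ‖A ∘L cfc Real.sqrt b - cfc Real.sqrt c ∘L A‖ := norm_pos_iff.mpr hne
    set X := ‖A ∘L cfc Real.sqrt b - cfc Real.sqrt c ∘L A‖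
    have := main (X / (2 * ‖A‖ + 1)) (by positivity)
    have hA : (0:ℝ) ≤ ‖A‖ := norm_nonneg _
    have hd : (0:ℝ) < 2 * ‖A‖ + 1 := by positivity
    have hx : X / (2 * ‖A‖ + 1) * (2 * ‖A‖ + 1) = X := div_mul_cancel₀ X (ne_of_gt hd)
    nlinarith [mul_le_mul_of_nonneg_right this hd.le, hx, hpos, hA]
  rw [aux_sqrt_eq_cfc_real b hb, aux_sqrt_eq_cfc_real c hc]
  exact sub_eq_zero.mp hzero


lemma aux_intertwine_of_sq (A : E →L[ℂ] F) (R : E →L[ℂ] E) (R' : F →L[ℂ] F)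
    (hR : R.IsPositive) (hR' : R'.IsPositive)
    (h : A ∘L (R ∘L R) = (R' ∘L R') ∘L A) :
    A ∘L R = R' ∘L A := by
  have hR0 : (0 : E →L[ℂ] E) ≤ R := (ContinuousLinearMap.nonneg_iff_isPositive R).mpr hR
  have hR0' : (0 : F →L[ℂ] F) ≤ R' := (ContinuousLinearMap.nonneg_iff_isPositive R').mpr hR'
  have hb : (0 : E →L[ℂ] E) ≤ R ∘L R := by
    have h1 := star_mul_self_nonneg R
    rwa [hR.isSelfAdjoint.star_eq] at h1
  have hc : (0 : F →L[ℂ] F) ≤ R' ∘L R' := by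
    have h1 := star_mul_self_nonneg R'
    rwa [hR'.isSelfAdjoint.star_eq] at h1
  have h1 := aux_intertwine_cfc_sqrt A (R ∘L R) (R' ∘L R') hb hc h
  rwa [CFC.sqrt_unique (a := R ∘L R) rfl hR0,
    CFC.sqrt_unique (a := R' ∘L R') rfl hR0'] at h1

end Aux2

section Aux3

lemma aux_sqrt_ext {H : Type*} [NormedAddCommGroup H] [InnerProductSpace ℂ H] [CompleteSpace H]
    (K' : Submodule ℂ H) [CompleteSpace ↥K'] (B : H →L[ℂ] H)
    (R : ↥K'ᗮ →L[ℂ] ↥K'ᗮ) (hR : R.IsPositive)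
    (hker : ∀ x ∈ K', B x = 0)
    (hsq : ∀ v : ↥K'ᗮ, ((R (R v) : H)) = B v) :
    CFC.sqrt B = K'ᗮ.subtypeL ∘L R ∘L (Submodule.orthogonalProjectionOnto K'ᗮ) := by
  refine CFC.sqrt_unique ?_ ?_
  · ext h
    have hPh : Submodule.orthogonalProjectionOnto K'ᗮ ((Submodule.orthogonalProjectionOnto K'ᗮ h : ↥K'ᗮ) : H)
        = Submodule.orthogonalProjectionOnto K'ᗮ h := Submodule.orthogonalProjectionOnto_mem_subspace_eq_self _
    have hmem : h - ((Submodule.orthogonalProjectionOnto K'ᗮ h : ↥K'ᗮ) : H) ∈ K' := by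
      have := Submodule.sub_starProjection_mem_orthogonal (K := K'ᗮ) h
      rwa [Submodule.orthogonal_orthogonal K'] at this
    have hBh : B h = B ((Submodule.orthogonalProjectionOnto K'ᗮ h : ↥K'ᗮ) : H) := by
      have h0 := hker _ hmem
      rw [map_sub] at h0
      exact sub_eq_zero.mp h0
    simp only [ContinuousLinearMap.mul_apply, ContinuousLinearMap.comp_apply,
      Submodule.subtypeL_apply]
    rw [Submodule.orthogonalProjectionOnto_mem_subspace_eq_self, hsq, ← hBh]
  · rw [ContinuousLinearMap.nonneg_iff_isPositive]
    have h1 := hR.conj_adjoint (K'ᗮ.subtypeL)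
    rwa [K'ᗮ.adjoint_subtypeL] at h1

end Aux3
/-- Let `T` be a contraction on `H` whose non-unitary part
`t = T|_{K^⊥} : K^⊥ → K⋆^⊥` satisfies `‖t‖ < 1`. Fix `|λ| < 1` and let
`a ∈ W_λ ∩ A_T^⊥s` with components `a₊ ∈ K^⊥`, `a₋ ∈ K⋆^⊥` in the orthogonal
decomposition `a = (x₀, Tx₀) + (a₊, 0) + (0, a₋)` (`x₀ ∈ K`). With
`Γ'₊a = (Id − t*t)^{-1/2}a₊ − t*(Id − tt*)^{-1/2}a₋` and
`Γ'₋a = t(Id − t*t)^{-1/2}a₊ − (Id − tt*)^{-1/2}a₋`, one has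
`Θ_T(λ)(Γ'₊a) + Γ'₋a = 0`, where
`Θ_T(λ)u = −Tu + λ𝔇⋆(Id − λT*)⁻¹𝔇u` with `𝔇 = (Id − T*T)^{1/2}`,
`𝔇⋆ = (Id − TT*)^{1/2}` (positive square roots; `(Id − t*t)^{-1/2}` is the
inverse `Sp` of the positive square root `Rp` of `Id − t*t`, and similarly
`Sm`, `Rm` for `Id − tt*`; operator inverses on `H` are `Ring.inverse`). -/
theorem characteristic_function_relation
    {H : Type*} [NormedAddCommGroup H] [InnerProductSpace ℂ H] [CompleteSpace H]
    (T : H →L[ℂ] H) (hT : ‖T‖ ≤ 1)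
    (K Ks : Submodule ℂ H)
    (hK : K = LinearMap.ker ((1 - adjoint T ∘L T : H →L[ℂ] H) : H →ₗ[ℂ] H))
    (hKs : Ks = LinearMap.ker ((1 - T ∘L adjoint T : H →L[ℂ] H) : H →ₗ[ℂ] H))
    (t : ↥Kᗮ →L[ℂ] ↥Ksᗮ) (ht : ∀ u : ↥Kᗮ, (t u : H) = T (u : H))
    (htnorm : ‖t‖ < 1)
    (lam : ℂ) (hlam : ‖lam‖ < 1)
    (a : H × H)
    (haW : ∃ x : H, a = (x, lam • x))
    (haATs : ∀ b ∈ {p : H × H | ∃ x ∈ K, p = (x, T x)},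
      Complex.I * ⟪b.1, a.1⟫_ℂ - Complex.I * ⟪b.2, a.2⟫_ℂ = 0)
    (x₀ : H) (hx₀ : x₀ ∈ K) (ap : ↥Kᗮ) (am : ↥Ksᗮ)
    (hadec : a = (x₀, T x₀) + ((ap : H), 0) + (0, (am : H)))
    (Rp Sp : ↥Kᗮ →L[ℂ] ↥Kᗮ)
    (hRp : Rp.IsPositive ∧ Rp ∘L Rp = 1 - adjoint t ∘L t)
    (hSp : Sp ∘L Rp = 1 ∧ Rp ∘L Sp = 1)
    (Rm Sm : ↥Ksᗮ →L[ℂ] ↥Ksᗮ)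
    (hRm : Rm.IsPositive ∧ Rm ∘L Rm = 1 - t ∘L adjoint t)
    (hSm : Sm ∘L Rm = 1 ∧ Rm ∘L Sm = 1)
    (Gp : ↥Kᗮ) (hGp : Gp = Sp ap - adjoint t (Sm am))
    (Gm : ↥Ksᗮ) (hGm : Gm = t (Sp ap) - Sm am)
    (D Ds : H →L[ℂ] H)
    (hD : D = CFC.sqrt (1 - adjoint T ∘L T))
    (hDs : Ds = CFC.sqrt (1 - T ∘L adjoint T)) :
    (-(T (Gp : H)) + lam • Ds (Ring.inverse (1 - lam • adjoint T) (D (Gp : H))))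
      + (Gm : H) = 0 := by
  haveI hcK : CompleteSpace ↥K := by
    subst hK; exact (ContinuousLinearMap.isClosed_ker _).completeSpace_coe
  haveI hcKs : CompleteSpace ↥Ks := by
    subst hKs; exact (ContinuousLinearMap.isClosed_ker _).completeSpace_coe
  -- membership facts
  have hKmem : ∀ y ∈ K, adjoint T (T y) = y := by
    intro y hy
    rw [hK, LinearMap.mem_ker] at hy
    have : y - adjoint T (T y) = 0 := by
      simpa [ContinuousLinearMap.sub_apply, ContinuousLinearMap.one_apply,
        ContinuousLinearMap.comp_apply] using hy
    exact (sub_eq_zero.mp this).symm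
  have hTK : ∀ y ∈ K, T y ∈ Ks := by
    intro y hy
    rw [hKs, LinearMap.mem_ker]
    simp only [ContinuousLinearMap.coe_coe, ContinuousLinearMap.sub_apply, ContinuousLinearMap.one_apply,
      ContinuousLinearMap.comp_apply]
    rw [hKmem y hy, sub_self]
  -- adjoint coercion
  have htadj : ∀ v : ↥Ksᗮ, ((adjoint t v : H)) = adjoint T (v : H) := by
    intro v
    have hmem : adjoint T (v : H) ∈ Kᗮ := by
      rw [Submodule.mem_orthogonal]
      intro y hy
      rw [ContinuousLinearMap.adjoint_inner_right]
      exact (Submodule.mem_orthogonal Ks (v : H)).mp v.2 (T y) (hTK y hy)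
    have : adjoint t v = (⟨adjoint T (v : H), hmem⟩ : ↥Kᗮ) := by
      refine ext_inner_left ℂ fun u => ?_
      rw [ContinuousLinearMap.adjoint_inner_right, Submodule.coe_inner,
        Submodule.coe_inner, ht u, ← ContinuousLinearMap.adjoint_inner_right]
    rw [this]
  -- decomposition relations
  obtain ⟨x, hax⟩ := haW
  have hfst : x = x₀ + (ap : H) := by
    have h1 := congrArg Prod.fst (hax.symm.trans hadec)
    simpa using h1
  have hkey : lam • (x₀ + (ap : H)) = T x₀ + (am : H) := by
    have h2 := congrArg Prod.snd (hax.symm.trans hadec)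
    simp only [Prod.snd_add] at h2
    rw [← hfst]
    simpa using h2
  -- intertwining
  have hint : adjoint t ∘L Rm = Rp ∘L adjoint t := by
    refine aux_intertwine_of_sq (adjoint t) Rm Rp hRm.1 hRp.1 ?_
    rw [hRm.2, hRp.2]
    simp only [ContinuousLinearMap.comp_sub, ContinuousLinearMap.sub_comp,
      ContinuousLinearMap.comp_id, ContinuousLinearMap.id_comp,
      ContinuousLinearMap.one_def, ContinuousLinearMap.comp_assoc]
  -- representation of D and Ds
  have hDrep : D = Kᗮ.subtypeL ∘L Rp ∘L (Submodule.orthogonalProjectionOnto Kᗮ) := by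
    rw [hD]
    refine aux_sqrt_ext K _ Rp hRp.1 ?_ ?_
    · intro y hy
      rw [hK, LinearMap.mem_ker] at hy
      exact hy
    · intro v
      have h1 : Rp (Rp v) = v - adjoint t (t v) := by
        rw [← ContinuousLinearMap.comp_apply, hRp.2]
        simp [ContinuousLinearMap.sub_apply, ContinuousLinearMap.one_apply,
          ContinuousLinearMap.comp_apply]
      rw [h1]
      push_cast [Submodule.coe_sub]
      rw [htadj, ht]
      simp [ContinuousLinearMap.sub_apply, ContinuousLinearMap.one_apply,
        ContinuousLinearMap.comp_apply]
  have hDsrep : Ds = Ksᗮ.subtypeL ∘L Rm ∘L (Submodule.orthogonalProjectionOnto Ksᗮ) := by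
    rw [hDs]
    refine aux_sqrt_ext Ks _ Rm hRm.1 ?_ ?_
    · intro y hy
      rw [hKs, LinearMap.mem_ker] at hy
      exact hy
    · intro v
      have h1 : Rm (Rm v) = v - t (adjoint t v) := by
        rw [← ContinuousLinearMap.comp_apply, hRm.2]
        simp [ContinuousLinearMap.sub_apply, ContinuousLinearMap.one_apply,
          ContinuousLinearMap.comp_apply]
      rw [h1]
      push_cast [Submodule.coe_sub]
      rw [ht, htadj]
      simp [ContinuousLinearMap.sub_apply, ContinuousLinearMap.one_apply,
        ContinuousLinearMap.comp_apply]
  -- value of D at Gp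
  have hRpGp : Rp Gp = ap - adjoint t am := by
    rw [hGp, map_sub]
    have h1 : Rp (Sp ap) = ap := by
      rw [← ContinuousLinearMap.comp_apply, hSp.2, ContinuousLinearMap.one_apply]
    have h2 : Rp (adjoint t (Sm am)) = adjoint t am := by
      rw [← ContinuousLinearMap.comp_apply, ← hint, ContinuousLinearMap.comp_apply]
      congr 1
      rw [← ContinuousLinearMap.comp_apply, hSm.2, ContinuousLinearMap.one_apply]
    rw [h1, h2]
  have hDGp : D (Gp : H) = (ap : H) - adjoint T (am : H) := by
    rw [hDrep]
    simp only [ContinuousLinearMap.comp_apply, Submodule.subtypeL_apply]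
    rw [Submodule.orthogonalProjectionOnto_mem_subspace_eq_self, hRpGp]
    push_cast [Submodule.coe_sub]
    rw [htadj]
  -- the resolvent step
  have hTTx₀ : adjoint T (T x₀) = x₀ := hKmem x₀ hx₀
  have hu : (1 - lam • adjoint T) (x₀ + (ap : H)) = D (Gp : H) := by
    rw [hDGp]
    simp only [ContinuousLinearMap.sub_apply, ContinuousLinearMap.one_apply,
      ContinuousLinearMap.smul_apply]
    rw [← map_smul, hkey, map_add, hTTx₀]
    abel
  have hn1 : ‖lam • adjoint T‖ < 1 := by
    rw [norm_smul]
    rw [show ‖adjoint T‖ = ‖T‖ from LinearIsometryEquiv.norm_map ContinuousLinearMap.adjoint T]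
    calc ‖lam‖ * ‖T‖ ≤ ‖lam‖ * 1 := by
          exact mul_le_mul_of_nonneg_left hT (norm_nonneg _)
      _ = ‖lam‖ := by rw [mul_one]
      _ < 1 := hlam
  have hinv : Ring.inverse (1 - lam • adjoint T) (D (Gp : H)) = x₀ + (ap : H) := by
    have hU : IsUnit (1 - lam • adjoint T) := by
      have := (Units.oneSub _ hn1).isUnit
      rwa [Units.val_oneSub] at this
    rw [← hu, ← ContinuousLinearMap.mul_apply,
      Ring.inverse_mul_cancel _ hU, ContinuousLinearMap.one_apply]
  -- the Ds step
  have hTx₀Ks : T x₀ ∈ (Ksᗮ)ᗮ := Submodule.le_orthogonal_orthogonal Ks (hTK x₀ hx₀)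
  have hDsu : lam • Ds (x₀ + (ap : H)) = ((Rm am : ↥Ksᗮ) : H) := by
    rw [← map_smul, hkey, hDsrep]
    simp only [ContinuousLinearMap.comp_apply, Submodule.subtypeL_apply, map_add]
    rw [Submodule.orthogonalProjectionOnto_apply_of_mem_orthogonal hTx₀Ks,
      Submodule.orthogonalProjectionOnto_mem_subspace_eq_self]
    simp
  -- final computation in Ksᗮ
  have hsum : -(t Gp) + Rm am + Gm = 0 := by
    have h2 : Rm (Sm am) = am := by
      rw [← ContinuousLinearMap.comp_apply, hSm.2, ContinuousLinearMap.one_apply]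
    have h1 : Rm am = Sm am - t (adjoint t (Sm am)) := by
      conv_lhs => rw [← h2, ← ContinuousLinearMap.comp_apply, hRm.2]
      simp [ContinuousLinearMap.sub_apply, ContinuousLinearMap.one_apply,
        ContinuousLinearMap.comp_apply]
    rw [hGp, hGm, map_sub, h1]
    abel
  rw [hinv, hDsu, ← ht Gp]
  have hfin := congrArg (Submodule.subtype Ksᗮ) hsum
  simpa using hfin
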